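/- Let H be a Hilbert space, T : H → K a densely defined closed operator, and suppose there is a measurable-weight type estimate: a closed subspace N ⊆ H, a constant c > 0 such that ‖T η‖² ≥ c ‖η‖² for all η ∈ dom T ∩ N^⊥ (where N = ker T). Then for every b ∈ (ker T*)^⊥ ∩ K, i.e. b in the closure of range T, there exists a ∈ dom T with T a = b, a ⊥ ker T, and ‖a‖² ≤ c⁻¹ ‖b‖². -/

import Mathlib

open scoped InnerProductSpace

/-- Abstract Hörmander-type existence theorem: if the densely defined closed
operator `T` satisfies `‖T η‖² ≥ c ‖η‖²` for all `η ∈ dom T` orthogonal to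
`ker T`, then every `b ⊥ ker T*` admits a solution `a ∈ dom T` of `T a = b`
with `a ⊥ ker T` and `‖a‖² ≤ c⁻¹ ‖b‖²`. -/
theorem stmt_14 {H K : Type*} [NormedAddCommGroup H] [InnerProductSpace ℂ H]
    [NormedAddCommGroup K] [InnerProductSpace ℂ K] [CompleteSpace H] [CompleteSpace K]
    (T : H →ₗ.[ℂ] K) (hdense : Dense (T.domain : Set H)) (hclosed : T.IsClosed)
    (c : ℝ) (hc : 0 < c)
    (hcoer : ∀ η : T.domain,
      (∀ x : T.domain, T x = 0 → ⟪(η : H), (x : H)⟫_ℂ = 0) →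
      c * ‖(η : H)‖ ^ 2 ≤ ‖T η‖ ^ 2)
    (b : K)
    (hb : ∀ v : T.adjoint.domain, T.adjoint v = 0 → ⟪(v : K), b⟫_ℂ = 0) :
    ∃ a : T.domain, T a = b ∧
      (∀ x : T.domain, T x = 0 → ⟪(a : H), (x : H)⟫_ℂ = 0) ∧
      ‖(a : H)‖ ^ 2 ≤ c⁻¹ * ‖b‖ ^ 2 := by
  classical
  -- the kernel of `T` as a submodule of `H`
  set N : Submodule ℂ H := (LinearMap.ker T.toFun).map T.domain.subtype with hNdef
  have hNmem : ∀ x : H, x ∈ N ↔ ∃ u : T.domain, (u : H) = x ∧ T u = 0 := by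
    intro x
    simp only [hNdef, Submodule.mem_map, LinearMap.mem_ker, Submodule.coe_subtype]
    exact ⟨fun ⟨u, h1, h2⟩ => ⟨u, h2, h1⟩, fun ⟨u, h1, h2⟩ => ⟨u, h2, h1⟩⟩
  -- the kernel is closed since the graph is closed
  have hNclosed : IsClosed (N : Set H) := by
    have hset : (N : Set H) = (fun x : H => (x, (0 : K))) ⁻¹' (T.graph : Set (H × K)) := by
      ext x
      simp only [Set.mem_preimage, SetLike.mem_coe, LinearPMap.mem_graph_iff]
      exact hNmem x
    rw [hset]
    exact hclosed.preimage (continuous_id.prodMk continuous_const)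
  haveI : CompleteSpace N := hNclosed.completeSpace_coe
  -- coercivity restated in terms of `Nᗮ`
  have hcoer' : ∀ η : T.domain, (η : H) ∈ Nᗮ → c * ‖(η : H)‖ ^ 2 ≤ ‖T η‖ ^ 2 := by
    intro η hη
    refine hcoer η fun x hx => ?_
    have hxN : (x : H) ∈ N := (hNmem _).mpr ⟨x, rfl, hx⟩
    exact inner_eq_zero_symm.mp ((Submodule.mem_orthogonal N _).mp hη _ hxN)
  -- decomposition: every `u ∈ dom T` has a part orthogonal to `N` with the same image
  have hdecomp : ∀ u : T.domain, ∃ η : T.domain, (η : H) ∈ Nᗮ ∧ T η = T u := by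
    intro u
    have hp : ((Submodule.orthogonalProjection N (u : H)) : H) ∈ N := Submodule.coe_mem _
    obtain ⟨u₀, hu₀eq, hu₀ker⟩ := (hNmem _).mp hp
    refine ⟨u - u₀, ?_, ?_⟩
    · have h1 := Submodule.sub_starProjection_mem_orthogonal (K := N) (u : H)
      have h2 : ((u - u₀ : T.domain) : H) = (u : H) - ((Submodule.orthogonalProjection N (u : H)) : H) := by
        rw [← hu₀eq]; rfl
      rw [h2]; exact h1
    · rw [T.map_sub, hu₀ker, sub_zero]
  -- the range of `T`
  set R : Submodule ℂ K := LinearMap.range T.toFun with hRdef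
  -- `b` lies in the closure of the range of `T`
  have hbR : b ∈ closure (R : Set K) := by
    have h1 : b ∈ Rᗮᗮ := by
      rw [Submodule.mem_orthogonal]
      intro w hw
      have hw' : ∀ u : T.domain, ⟪w, T u⟫_ℂ = 0 := by
        intro u
        have := (Submodule.mem_orthogonal R w).mp hw _ ⟨u, rfl⟩
        exact inner_eq_zero_symm.mp this
      have hwdom : w ∈ T.adjoint.domain :=
        LinearPMap.mem_adjoint_domain_of_exists w ⟨0, fun x => by
          rw [inner_zero_left, hw' x]⟩
      have hw0 : T.adjoint ⟨w, hwdom⟩ = 0 :=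
        LinearPMap.adjoint_apply_eq hdense ⟨w, hwdom⟩ (fun x => by
          rw [inner_zero_left, hw' x])
      exact hb ⟨w, hwdom⟩ hw0
    rw [Submodule.orthogonal_orthogonal_eq_closure] at h1
    rwa [← Submodule.topologicalClosure_coe, SetLike.mem_coe]
  -- extract a sequence in the range converging to `b`
  obtain ⟨y, hyR, hy⟩ := mem_closure_iff_seq_limit.mp hbR
  choose u hu using fun n => (hyR n : y n ∈ R)
  choose η hηperp hηval using fun n => hdecomp (u n)
  have hTη : ∀ n, T (η n) = y n := fun n => (hηval n).trans (hu n)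
  -- the orthogonal parts form a Cauchy sequence
  have key : ∀ n m : ℕ, ‖(η n : H) - (η m : H)‖ ^ 2 ≤ c⁻¹ * ‖y n - y m‖ ^ 2 := by
    intro n m
    have hmem : ((η n - η m : T.domain) : H) ∈ Nᗮ := by
      have : ((η n - η m : T.domain) : H) = (η n : H) - (η m : H) := rfl
      rw [this]; exact Nᗮ.sub_mem (hηperp n) (hηperp m)
    have h1 := hcoer' _ hmem
    rw [T.map_sub, hTη n, hTη m] at h1
    have h2 : ((η n - η m : T.domain) : H) = (η n : H) - (η m : H) := rfl
    rw [h2] at h1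
    rw [← le_div_iff₀' hc, div_eq_inv_mul] at h1
    exact h1
  have hηc : CauchySeq (fun n => (η n : H)) := by
    rw [Metric.cauchySeq_iff]
    intro ε hε
    obtain ⟨Nn, hNn⟩ := Metric.cauchySeq_iff.mp hy.cauchySeq (Real.sqrt c * ε)
      (by positivity)
    refine ⟨Nn, fun m hm n hn => ?_⟩
    have h2 := key m n
    have hd : dist (y m) (y n) < Real.sqrt c * ε := hNn m hm n hn
    rw [dist_eq_norm] at hd
    have h3 : ‖y m - y n‖ ^ 2 < (Real.sqrt c * ε) ^ 2 := by
      have := norm_nonneg (y m - y n)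
      nlinarith
    have h4 : (Real.sqrt c * ε) ^ 2 = c * ε ^ 2 := by
      rw [mul_pow, Real.sq_sqrt hc.le]
    have h5 : ‖(η m : H) - (η n : H)‖ ^ 2 < ε ^ 2 := by
      have hc' : (0:ℝ) < c⁻¹ := by positivity
      calc ‖(η m : H) - (η n : H)‖ ^ 2 ≤ c⁻¹ * ‖y m - y n‖ ^ 2 := key m n
        _ < c⁻¹ * (c * ε ^ 2) := by rw [← h4]; exact (mul_lt_mul_iff_right₀ hc').mpr h3
        _ = ε ^ 2 := by field_simp
    rw [dist_eq_norm]
    exact lt_of_pow_lt_pow_left₀ 2 hε.le h5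
  obtain ⟨xlim, hxlim⟩ := cauchySeq_tendsto_of_complete hηc
  -- pass to the limit in the graph
  have hgraph : ((xlim, b) : H × K) ∈ T.graph := by
    have hmemn : ∀ n, (((η n : H), y n) : H × K) ∈ (T.graph : Set (H × K)) := by
      intro n
      have := T.mem_graph (η n)
      rwa [hTη n] at this
    exact hclosed.mem_of_tendsto (hxlim.prodMk_nhds hy) (Filter.Eventually.of_forall hmemn)
  obtain ⟨a, ha1, ha2⟩ := T.mem_graph_iff.mp hgraph
  -- `xlim ∈ Nᗮ`
  have hxperp : xlim ∈ Nᗮ := by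
    have hcl : IsClosed ((Nᗮ : Submodule ℂ H) : Set H) := N.isClosed_orthogonal
    exact hcl.mem_of_tendsto hxlim (Filter.Eventually.of_forall fun n => hηperp n)
  have haperp : (a : H) ∈ Nᗮ := ha1 ▸ hxperp
  refine ⟨a, ha2, fun x hx => ?_, ?_⟩
  · have hxN : (x : H) ∈ N := (hNmem _).mpr ⟨x, rfl, hx⟩
    exact inner_eq_zero_symm.mp ((Submodule.mem_orthogonal N _).mp haperp _ hxN)
  · have h1 := hcoer' a haperp
    rw [ha2] at h1
    have hc' : (0:ℝ) ≤ c⁻¹ := by positivity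
    calc ‖(a : H)‖ ^ 2 = c⁻¹ * (c * ‖(a : H)‖ ^ 2) := by field_simp
      _ ≤ c⁻¹ * ‖b‖ ^ 2 := mul_le_mul_of_nonneg_left h1 hc'
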